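/- Let $(f_j)$ be a sequence of concave differentiable functions on $\mathbb{R}$ and $g$ a function on $\mathbb{R}$ differentiable at $0$, such that $\liminf_{j\to\infty} f_j(t) \ge g(t)$ for every $t \in \mathbb{R}$ and $\lim_{j\to\infty} f_j(0) = g(0)$. Then $\lim_{j\to\infty} f_j'(0) = g'(0)$. -/

import Mathlib

open Filter Topology

private lemma concave_slope_le {f : ℝ → ℝ} {d : ℝ} (hf : ConcaveOn ℝ Set.univ f)
    (hd : HasDerivAt f d 0) {t : ℝ} (ht : 0 < t) : (f t - f 0) / t ≤ d := by
  have h := hf.neg.le_slope_of_hasDerivAt (Set.mem_univ 0) (Set.mem_univ t) ht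
    (by simpa using hd.neg)
  simp only [slope_def_field, Pi.neg_apply] at h
  have eq : (-f t - -f 0) / (t - 0) = -((f t - f 0) / t) := by
    rw [sub_zero, show -f t - -f 0 = -(f t - f 0) by ring, neg_div]
  rw [eq] at h
  linarith

private lemma le_concave_slope {f : ℝ → ℝ} {d : ℝ} (hf : ConcaveOn ℝ Set.univ f)
    (hd : HasDerivAt f d 0) {t : ℝ} (ht : t < 0) : d ≤ (f t - f 0) / t := by
  have h := hf.neg.slope_le_of_hasDerivAt (Set.mem_univ t) (Set.mem_univ 0) ht
    (by simpa using hd.neg)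
  simp only [slope_def_field, Pi.neg_apply] at h
  have eq : (-f 0 - -f t) / (0 - t) = -((f t - f 0) / t) := by
    rw [show (0:ℝ) - t = -t by ring, show -f 0 - -f t = f t - f 0 by ring, div_neg]
  rw [eq] at h
  linarith

/-- If `f j` are concave functions on `ℝ`, each differentiable at `0` with derivative `f' j`,
`g` is differentiable at `0` with derivative `g'`, `liminf_j f j t ≥ g t` for every `t`, and
`f j 0 → g 0`, then `f' j → g'`. -/
theorem stmt_0 (f : ℕ → ℝ → ℝ) (g : ℝ → ℝ) (f' : ℕ → ℝ) (g' : ℝ)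
    (hconc : ∀ j, ConcaveOn ℝ Set.univ (f j))
    (hderiv : ∀ j, HasDerivAt (f j) (f' j) 0)
    (hg : HasDerivAt g g' 0)
    (hliminf : ∀ t : ℝ, ∀ ε > (0 : ℝ), ∀ᶠ j in atTop, g t - ε ≤ f j t)
    (hlim0 : Tendsto (fun j => f j 0) atTop (𝓝 (g 0))) :
    Tendsto f' atTop (𝓝 g') := by
  have hslope : Tendsto (fun t : ℝ => (g t - g 0) / t) (𝓝[≠] (0:ℝ)) (𝓝 g') := by
    have := hasDerivAt_iff_tendsto_slope.mp hg
    refine this.congr' ?_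
    filter_upwards with t
    simp [slope_def_field]
  rw [tendsto_order]
  constructor
  · -- a < g' : eventually a < f' j, using t > 0
    intro a ha
    set b := (a + g') / 2 with hb
    have hab : a < b := by rw [hb]; linarith
    have hbg : b < g' := by rw [hb]; linarith
    have hs : Tendsto (fun t : ℝ => (g t - g 0) / t) (𝓝[>] (0:ℝ)) (𝓝 g') :=
      hslope.mono_left (nhdsWithin_mono _ (fun x hx => ne_of_gt hx))
    obtain ⟨t, hbt, ht0⟩ :=
      ((hs.eventually (eventually_gt_nhds hbg)).and self_mem_nhdsWithin).exists
    have ht0 : (0:ℝ) < t := ht0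
    set δ := (b - a) * t / 2 with hδ
    have hδ0 : 0 < δ := by
      have hba : 0 < b - a := by linarith
      positivity
    filter_upwards [hliminf t δ hδ0,
      hlim0.eventually (eventually_lt_nhds (show g 0 < g 0 + δ by linarith))] with j h1 h2
    have key : (f j t - f j 0) / t ≤ f' j := concave_slope_le (hconc j) (hderiv j) ht0
    have h3 : (g t - g 0) / t - (b - a) ≤ (f j t - f j 0) / t := by
      rw [div_sub' ht0.ne', div_le_div_iff₀ ht0 ht0]
      have : g t - δ - (g 0 + δ) ≤ f j t - f j 0 := by linarith
      nlinarith
    linarith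
  · -- g' < a : eventually f' j < a, using t < 0
    intro a ha
    set b := (a + g') / 2 with hb
    have hab : b < a := by rw [hb]; linarith
    have hbg : g' < b := by rw [hb]; linarith
    have hs : Tendsto (fun t : ℝ => (g t - g 0) / t) (𝓝[<] (0:ℝ)) (𝓝 g') :=
      hslope.mono_left (nhdsWithin_mono _ (fun x hx => ne_of_lt hx))
    obtain ⟨t, hbt, ht0⟩ :=
      ((hs.eventually (eventually_lt_nhds hbg)).and self_mem_nhdsWithin).exists
    have ht0 : t < 0 := ht0
    set δ := (a - b) * (-t) / 2 with hδ
    have hδ0 : 0 < δ := by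
      have h1 : 0 < -t := by linarith
      have h2 : 0 < a - b := by linarith
      positivity
    filter_upwards [hliminf t δ hδ0,
      hlim0.eventually (eventually_lt_nhds (show g 0 < g 0 + δ by linarith))] with j h1 h2
    have key : f' j ≤ (f j t - f j 0) / t := le_concave_slope (hconc j) (hderiv j) ht0
    have h3 : (f j t - f j 0) / t ≤ (g t - g 0) / t + (a - b) := by
      rw [div_le_iff_of_neg ht0]
      have hnum : g t - g 0 - 2 * δ ≤ f j t - f j 0 := by linarith
      have : ((g t - g 0) / t + (a - b)) * t = (g t - g 0) + (a - b) * t := by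
        field_simp [ht0.ne]
      rw [this]
      have : (a - b) * t = -2 * δ := by rw [hδ]; ring
      linarith
    linarith
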